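/- Let C be a monoidal category with unit object 𝟙, and let x be an object of C that is weakly invertible, i.e., there exists an object y with x ⊗ y ≅ 𝟙 and y ⊗ x ≅ 𝟙. Then the map from the automorphism group Aut(𝟙) to the automorphism group Aut(x) sending u to (λ_x)⁻¹ ≫ (u ▷ x) ≫ λ_x (that is, tensoring u on the right with the identity of x, transported along the left unitor λ_x : 𝟙 ⊗ x ≅ x) is an isomorphism of groups. -/

import Mathlib

open CategoryTheory MonoidalCategory

theorem aut_unit_mulEquiv_aut_of_weaklyInvertible
    {C : Type*} [Category C] [MonoidalCategory C] (x : C)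
    (hx : ∃ y : C, Nonempty (x ⊗ y ≅ 𝟙_ C) ∧ Nonempty (y ⊗ x ≅ 𝟙_ C)) :
    ∃ e : Aut (𝟙_ C) ≃* Aut x,
      ∀ u : Aut (𝟙_ C),
        (e u).hom = (λ_ x).inv ≫ (u.hom ▷ x) ≫ (λ_ x).hom := by
  obtain ⟨y, ⟨e1⟩, ⟨e2⟩⟩ := hx
  let η : 𝟭 C ≅ tensorRight x ⋙ tensorRight y :=
    NatIso.ofComponents
      (fun z => (ρ_ z).symm ≪≫ whiskerLeftIso z e1.symm ≪≫ (α_ z x y).symm)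
      (by
        intro X Y f
        dsimp
        simp only [Category.assoc, whiskerLeftIso_hom]
        rw [← associator_inv_naturality_left, whisker_exchange_assoc,
          rightUnitor_inv_naturality_assoc])
  let ε : tensorRight y ⋙ tensorRight x ≅ 𝟭 C :=
    NatIso.ofComponents
      (fun z => α_ z y x ≪≫ whiskerLeftIso z e2 ≪≫ ρ_ z)
      (by
        intro X Y f
        dsimp
        rw [associator_naturality_left_assoc, whiskerLeftIso_hom]
        slice_lhs 2 3 => rw [← whisker_exchange]
        simp)
  let equiv : C ≌ C := CategoryTheory.Equivalence.mk (tensorRight x) (tensorRight y) η ε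
  have hF : (tensorRight x).FullyFaithful := equiv.fullyFaithfulFunctor
  let e0 : Aut (𝟙_ C) ≃ Aut x :=
    (hF.isoEquiv (X := 𝟙_ C) (Y := 𝟙_ C)).trans (λ_ x).conjAut.toEquiv
  refine ⟨MulEquiv.mk' e0 ?_, fun u => ?_⟩
  · intro u v
    have h : ∀ w : Aut (𝟙_ C), e0 w = (λ_ x).conjAut ((tensorRight x).mapIso w) :=
      fun _ => rfl
    simp only [h]
    erw [← map_mul]
    congr 1
    ext
    erw [Aut.Aut_mul_def, Aut.Aut_mul_def]
    simp [Aut.Aut_mul_def]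
    exact comp_whiskerRight _ _ _
  · show ((λ_ x).conjAut ((tensorRight x).mapIso u)).hom = _
    erw [Iso.conjAut_hom, Iso.conj_apply]
    simp
    rfl
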